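/- arXiv:1709.00651 — 2 statements merged into one kernel-verified Lean document; each statement's English description precedes it below -/
import Mathlib

section
/- For every positive integer n, the set X_n consisting of the points (cos(2iπ/n), cos((2j−1)π/(n+1))) for 0 ≤ i ≤ ⌊n/2⌋, 1 ≤ j ≤ ⌊n/2⌋+1, together with the points (cos((2i−1)π/n), cos((2j−2)π/(n+1))) for 1 ≤ i ≤ ⌊n/2⌋+1, 1 ≤ j ≤ ⌊n/2⌋+2, has cardinality (n+1)(n+2)/2 = dim Π_n^2. -/
open Real

/-- The set of Padua points. -/
def paduaPoints (n : ℕ) : Set (ℝ × ℝ) :=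
  {p | ∃ i j : ℕ, i ≤ n / 2 ∧ 1 ≤ j ∧ j ≤ n / 2 + 1 ∧
        p = (cos (2 * i * π / n), cos ((2 * j - 1) * π / (n + 1)))} ∪
  {p | ∃ i j : ℕ, 1 ≤ i ∧ i ≤ n / 2 + 1 ∧ 1 ≤ j ∧ j ≤ n / 2 + 2 ∧
        p = (cos ((2 * i - 1) * π / n), cos ((2 * j - 2) * π / (n + 1)))}

lemma padua_cos_inj {d a b : ℝ} (hd : 0 < d)
    (ha0 : 0 ≤ a) (ha1 : a ≤ d) (hb0 : 0 ≤ b) (hb1 : b ≤ d)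
    (h : Real.cos (a * π / d) = Real.cos (b * π / d)) : a = b := by
  have hπ := Real.pi_pos
  have h1 : a * π / d ∈ Set.Icc 0 π :=
    ⟨by positivity, by rw [div_le_iff₀ hd]; nlinarith⟩
  have h2 : b * π / d ∈ Set.Icc 0 π :=
    ⟨by positivity, by rw [div_le_iff₀ hd]; nlinarith⟩
  have h3 := Real.injOn_cos h1 h2 h
  rw [div_eq_div_iff (ne_of_gt hd) (ne_of_gt hd)] at h3
  have h4 : a * π = b * π := mul_right_cancel₀ (ne_of_gt hd) h3
  exact mul_right_cancel₀ (ne_of_gt hπ) h4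

lemma padua_card_image {d : ℝ} (hd : 0 < d) (s : Finset ℕ) (c : ℕ → ℝ)
    (hinj : ∀ k ∈ s, ∀ l ∈ s, c k = c l → k = l)
    (h0 : ∀ k ∈ s, 0 ≤ c k) (h1 : ∀ k ∈ s, c k ≤ d) :
    (s.image fun k => Real.cos (c k * π / d)).card = s.card := by
  apply Finset.card_image_of_injOn
  intro k hk l hl h
  exact hinj k hk l hl (padua_cos_inj hd (h0 k hk) (h1 k hk) (h0 l hl) (h1 l hl) h)

/-- The set of Padua points has cardinality `(n+1)(n+2)/2 = dim Π_n^2`. -/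
theorem paduaPoints_ncard (n : ℕ) (hn : 0 < n) :
    (paduaPoints n).ncard = (n + 1) * (n + 2) / 2 := by
  have hπ := Real.pi_pos
  have hnR : (0:ℝ) < n := by exact_mod_cast hn
  have hn1R : (0:ℝ) < (n:ℝ) + 1 := by linarith
  set m := n / 2 with hm
  set K := (n + 1) / 2 with hK
  set L := (n + 3) / 2 with hL
  set SA : Finset ℝ := (Finset.range (m+1)).image (fun i : ℕ => cos (2*i*π/n)) with hSA
  set TA : Finset ℝ := (Finset.Icc 1 (m+1)).image (fun j : ℕ => cos ((2*j-1)*π/(n+1))) with hTA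
  set SB : Finset ℝ := (Finset.Icc 1 K).image (fun i : ℕ => cos ((2*i-1)*π/n)) with hSB
  set TB : Finset ℝ := (Finset.Icc 1 L).image (fun j : ℕ => cos ((2*j-2)*π/(n+1))) with hTB
  -- normalization: the original index ranges give the same images
  have hSBfull : (Finset.Icc 1 (m+1)).image (fun i : ℕ => cos ((2*i-1)*π/n)) = SB := by
    rw [hSB]
    rcases Nat.even_or_odd n with ⟨a, ha⟩ | ⟨a, ha⟩
    · have ha1 : 1 ≤ a := by omega
      have hKa : K = a := by omega
      have hma : m = a := by omega
      rw [hKa, hma]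
      have hna : (n:ℝ) = 2*a := by exact_mod_cast (show n = 2*a by omega)
      have haR : (0:ℝ) < a := by exact_mod_cast ha1
      have hgx : Real.cos ((2*((a:ℝ)+1)-1)*π/(n:ℝ)) = Real.cos ((2*(a:ℝ)-1)*π/(n:ℝ)) := by
        rw [show (2*((a:ℝ)+1)-1)*π/(n:ℝ) = π/(2*a) + π by rw [hna]; field_simp; ring,
            show (2*(a:ℝ)-1)*π/(n:ℝ) = π - π/(2*a) by rw [hna]; field_simp,
            Real.cos_add_pi, Real.cos_pi_sub]
      rw [← Finset.insert_Icc_right_eq_Icc_add_one (by omega : 1 ≤ a + 1), Finset.image_insert,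
          Finset.insert_eq_self.mpr]
      refine Finset.mem_image.mpr ⟨a, Finset.mem_Icc.mpr ⟨ha1, le_refl a⟩, ?_⟩
      push_cast
      exact hgx.symm
    · have : K = m + 1 := by omega
      rw [this]
  have hTBfull : (Finset.Icc 1 (m+2)).image (fun j : ℕ => cos ((2*j-2)*π/(n+1))) = TB := by
    rw [hTB]
    rcases Nat.even_or_odd n with ⟨a, ha⟩ | ⟨a, ha⟩
    · have ha1 : 1 ≤ a := by omega
      have hLa : L = a + 1 := by omega
      have hma : m = a := by omega
      rw [hLa, hma]
      have hna : (n:ℝ) = 2*a := by exact_mod_cast (show n = 2*a by omega)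
      have haR : (0:ℝ) < a := by exact_mod_cast ha1
      have hgy : Real.cos ((2*((a:ℝ)+2)-2)*π/((n:ℝ)+1)) = Real.cos ((2*((a:ℝ)+1)-2)*π/((n:ℝ)+1)) := by
        rw [show (2*((a:ℝ)+2)-2)*π/((n:ℝ)+1) = 2*π - (2*((a:ℝ)+1)-2)*π/((n:ℝ)+1) by
              rw [hna]; field_simp; ring,
            Real.cos_two_pi_sub]
      rw [show a + 2 = (a + 1) + 1 from rfl, ← Finset.insert_Icc_right_eq_Icc_add_one (by omega : 1 ≤ a + 1 + 1),
          Finset.image_insert, Finset.insert_eq_self.mpr]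
      refine Finset.mem_image.mpr ⟨a + 1, Finset.mem_Icc.mpr ⟨by omega, by omega⟩, ?_⟩
      push_cast
      convert hgy.symm using 3
      ring
    · have : L = m + 2 := by omega
      rw [this]
  have hset : paduaPoints n = ↑((SA ×ˢ TA) ∪ (SB ×ˢ TB)) := by
    rw [← hSBfull, ← hTBfull] at *
    ext p
    simp only [paduaPoints, Set.mem_union, Set.mem_setOf_eq, Finset.coe_union,
      Finset.coe_product, Set.mem_prod, Finset.mem_coe, Finset.mem_image,
      Finset.mem_range, Finset.mem_Icc, hSA, hTA]
    constructor
    · rintro (⟨i, j, hi, hj1, hj2, rfl⟩ | ⟨i, j, hi1, hi2, hj1, hj2, rfl⟩)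
      · exact Or.inl ⟨⟨i, by omega, rfl⟩, ⟨j, ⟨hj1, hj2⟩, rfl⟩⟩
      · exact Or.inr ⟨⟨i, ⟨hi1, hi2⟩, rfl⟩, ⟨j, ⟨hj1, hj2⟩, rfl⟩⟩
    · rintro (⟨⟨i, hi, hx⟩, ⟨j, hj, hy⟩⟩ | ⟨⟨i, hi, hx⟩, ⟨j, hj, hy⟩⟩)
      · exact Or.inl ⟨i, j, by omega, hj.1, hj.2, by rw [hx, hy]⟩
      · exact Or.inr ⟨i, j, hi.1, hi.2, hj.1, hj.2, by rw [hx, hy]⟩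
  -- cardinalities
  have cSA : SA.card = m + 1 := by
    rw [hSA]
    have := padua_card_image hnR (Finset.range (m+1)) (fun i : ℕ => 2*(i:ℝ))
      (by intro k hk l hl h; exact_mod_cast mul_left_cancel₀ two_ne_zero h)
      (by intro k hk; positivity)
      (by intro k hk
          simp only [Finset.mem_range] at hk
          have : 2 * k ≤ n := by omega
          push_cast
          exact_mod_cast this)
    simpa using this
  have cTA : TA.card = m + 1 := by
    rw [hTA]
    have := padua_card_image hn1R (Finset.Icc 1 (m+1)) (fun j : ℕ => 2*(j:ℝ)-1)
      (by intro k hk l hl h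
          have : (k:ℝ) = l := by linarith
          exact_mod_cast this)
      (by intro k hk
          simp only [Finset.mem_Icc] at hk
          have : (1:ℝ) ≤ k := by exact_mod_cast hk.1
          linarith)
      (by intro k hk
          simp only [Finset.mem_Icc] at hk
          have : 2 * k ≤ n + 2 := by omega
          have : (2*k:ℝ) ≤ (n:ℝ) + 2 := by exact_mod_cast this
          linarith)
    simpa using this
  have cSB : SB.card = K := by
    rw [hSB]
    have := padua_card_image hnR (Finset.Icc 1 K) (fun i : ℕ => 2*(i:ℝ)-1)
      (by intro k hk l hl h
          have : (k:ℝ) = l := by linarith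
          exact_mod_cast this)
      (by intro k hk
          simp only [Finset.mem_Icc] at hk
          have : (1:ℝ) ≤ k := by exact_mod_cast hk.1
          linarith)
      (by intro k hk
          simp only [Finset.mem_Icc] at hk
          have : 2 * k ≤ n + 1 := by omega
          have : (2*k:ℝ) ≤ (n:ℝ) + 1 := by exact_mod_cast this
          linarith)
    simpa using this
  have cTB : TB.card = L := by
    rw [hTB]
    have := padua_card_image hn1R (Finset.Icc 1 L) (fun j : ℕ => 2*(j:ℝ)-2)
      (by intro k hk l hl h
          have : (k:ℝ) = l := by linarith
          exact_mod_cast this)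
      (by intro k hk
          simp only [Finset.mem_Icc] at hk
          have : (1:ℝ) ≤ k := by exact_mod_cast hk.1
          linarith)
      (by intro k hk
          simp only [Finset.mem_Icc] at hk
          have : 2 * k ≤ n + 3 := by omega
          have : (2*k:ℝ) ≤ (n:ℝ) + 3 := by exact_mod_cast this
          linarith)
    simpa using this
  -- disjointness
  have hdisj : Disjoint (SA ×ˢ TA) (SB ×ˢ TB) := by
    rw [Finset.disjoint_left]
    rintro ⟨x, y⟩ hA hB
    rw [Finset.mem_product] at hA hB
    obtain ⟨i, hi, hx⟩ := Finset.mem_image.mp hA.1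
    obtain ⟨k, hk, hx'⟩ := Finset.mem_image.mp hB.1
    simp only [Finset.mem_range, Finset.mem_Icc] at hi hk
    have heq : (2*(i:ℝ)) = 2*(k:ℝ)-1 := by
      apply padua_cos_inj hnR
      · positivity
      · have : 2 * i ≤ n := by omega
        exact_mod_cast this
      · have : (1:ℝ) ≤ k := by exact_mod_cast hk.1
        linarith
      · have : 2 * k ≤ n + 1 := by omega
        have : (2*k:ℝ) ≤ (n:ℝ) + 1 := by exact_mod_cast this
        linarith
      · rw [hx, hx']
    have : (2*i+1:ℝ) = 2*k := by linarith
    have : 2*i+1 = 2*k := by exact_mod_cast this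
    omega
  -- put it together
  rw [hset, Set.ncard_coe_finset, Finset.card_union_of_disjoint hdisj,
    Finset.card_product, Finset.card_product, cSA, cTA, cSB, cTB]
  rcases Nat.even_or_odd n with ⟨a, hn2⟩ | ⟨a, hn2⟩
  · have hm' : m = a := by omega
    have hK' : K = a := by omega
    have hL' : L = a + 1 := by omega
    subst hn2
    rw [hm', hK', hL']
    rw [show (a+a+1)*(a+a+2) = ((a+1)*(a+1)+a*(a+1))*2 by ring, Nat.mul_div_cancel _ two_pos]
  · have hm' : m = a := by omega
    have hK' : K = a + 1 := by omega
    have hL' : L = a + 2 := by omega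
    subst hn2
    rw [hm', hK', hL']
    rw [show (2*a+1+1)*(2*a+1+2) = ((a+1)*(a+1)+(a+1)*(a+2))*2 by ring, Nat.mul_div_cancel _ two_pos]
end

section
/- If a Gaussian cubature rule of degree 2n−1 exists for weight W on [−1,1]² (i.e., a positive cubature rule exact on Π_{2n−1}^2 with exactly n(n+1)/2 nodes), then every orthogonal polynomial of degree n with respect to W vanishes at every node. -/
open MeasureTheory MvPolynomial

/-- Evaluation of a bivariate polynomial at a point of the plane. -/
noncomputable def evalAt (p : ℝ × ℝ) (f : MvPolynomial (Fin 2) ℝ) : ℝ :=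
  MvPolynomial.eval ![p.1, p.2] f

lemma aux_sum (n : ℕ) : ∑ i ∈ Finset.range n, (n - i) = n * (n + 1) / 2 := by
  have h := Finset.sum_range_reflect (fun j => n - j) n
  rw [← h]
  have : ∀ j ∈ Finset.range n, n - (n - 1 - j) = j + 1 := by
    intro j hj; rw [Finset.mem_range] at hj; omega
  rw [Finset.sum_congr rfl this, Finset.sum_add_distrib, Finset.sum_const, Finset.card_range,
    smul_eq_mul, mul_one]
  have h2 := Finset.sum_range_id_mul_two n
  have h3 : n * (n + 1) = (∑ i ∈ Finset.range n, i) * 2 + 2 * n := by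
    rw [h2]; cases n with
    | zero => simp
    | succ m => simp [Nat.succ_sub_one]; ring
  omega

/-- If a Gaussian cubature rule of degree `2n−1` (a positive rule exact on `Π_{2n−1}^2`
with exactly `n(n+1)/2` nodes) exists for the weight `W` on `[−1,1]²`, then every
orthogonal polynomial of degree `n` with respect to `W` vanishes at every node. -/
theorem gaussian_cubature_nodes_are_zeros (n : ℕ) (hn : 1 ≤ n) (W : ℝ × ℝ → ℝ)
    (hW0 : ∀ p ∈ (Set.Icc (-1:ℝ) 1 ×ˢ Set.Icc (-1:ℝ) 1), 0 ≤ W p)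
    (hWpos : ∀ f : MvPolynomial (Fin 2) ℝ, f ≠ 0 → f.totalDegree ≤ 2 * n - 2 →
      (∀ p ∈ (Set.Icc (-1:ℝ) 1 ×ˢ Set.Icc (-1:ℝ) 1), 0 ≤ evalAt p f) →
      0 < ∫ p in (Set.Icc (-1:ℝ) 1 ×ˢ Set.Icc (-1:ℝ) 1), evalAt p f * W p)
    (N : ℕ) (hN : N = n * (n + 1) / 2)
    (node : Fin N → ℝ × ℝ) (lam : Fin N → ℝ) (hlam : ∀ k, 0 < lam k)
    (hexact : ∀ f : MvPolynomial (Fin 2) ℝ, f.totalDegree ≤ 2 * n - 1 →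
      ∫ p in (Set.Icc (-1:ℝ) 1 ×ˢ Set.Icc (-1:ℝ) 1), evalAt p f * W p =
        ∑ k, lam k * evalAt (node k) f)
    (P : MvPolynomial (Fin 2) ℝ) (hPdeg : P.totalDegree = n)
    (hPorth : ∀ Q : MvPolynomial (Fin 2) ℝ, Q.totalDegree < n →
      ∫ p in (Set.Icc (-1:ℝ) 1 ×ˢ Set.Icc (-1:ℝ) 1), evalAt p (P * Q) * W p = 0) :
    ∀ k, evalAt (node k) P = 0 := by
  classical
  set d := n - 1 with hd
  set V := restrictTotalDegree (Fin 2) ℝ d with hV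
  -- the evaluation linear map
  let T : V →ₗ[ℝ] (Fin N → ℝ) :=
    { toFun := fun f k => evalAt (node k) f.1
      map_add' := fun f g => by funext k; simp [evalAt]
      map_smul' := fun c f => by funext k; simp [evalAt, smul_eq_mul] }
  have hTapp : ∀ (f : V) (k : Fin N), T f k = evalAt (node k) f.1 := fun f k => rfl
  -- injectivity
  have hTinj : Function.Injective T := by
    rw [← LinearMap.ker_eq_bot, LinearMap.ker_eq_bot']
    intro f hf
    by_contra hfne
    have hfne' : (f : MvPolynomial (Fin 2) ℝ) ≠ 0 := fun h => hfne (Subtype.ext h)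
    have hdeg : (f : MvPolynomial (Fin 2) ℝ).totalDegree ≤ d :=
      (mem_restrictTotalDegree _ _ _).mp f.2
    have h1 : ((f : MvPolynomial (Fin 2) ℝ) * f).totalDegree ≤ 2 * n - 2 :=
      le_trans (totalDegree_mul _ _) (by omega)
    have hpos := hWpos ((f : MvPolynomial (Fin 2) ℝ) * f) (mul_ne_zero hfne' hfne') h1
      (fun p _ => by simp only [evalAt, map_mul]; exact mul_self_nonneg _)
    rw [hexact _ (le_trans h1 (by omega))] at hpos
    have hz : ∀ k : Fin N, lam k * evalAt (node k) ((f : MvPolynomial (Fin 2) ℝ) * f) = 0 := by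
      intro k
      have := congrFun hf k
      rw [hTapp] at this
      simp only [Pi.zero_apply] at this
      simp only [evalAt, map_mul] at this ⊢
      rw [this]; ring
    rw [Finset.sum_congr rfl (fun k _ => hz k)] at hpos
    simp at hpos
  -- lower bound on the dimension
  have hcard : Fintype.card (Σ a : Fin n, Fin (n - a)) = N := by
    rw [Fintype.card_sigma]
    simp only [Fintype.card_fin]
    rw [Fin.sum_univ_eq_sum_range, aux_sum, hN]
  let g : (Σ a : Fin n, Fin (n - (a : ℕ))) → (Fin 2 →₀ ℕ) := fun ab =>
    Finsupp.single 0 (ab.1 : ℕ) + Finsupp.single 1 (ab.2 : ℕ)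
  have hg0 : ∀ ab, g ab 0 = (ab.1 : ℕ) := by
    intro ab; simp [g, Finsupp.single_apply]
  have hg1 : ∀ ab, g ab 1 = (ab.2 : ℕ) := by
    intro ab; simp [g, Finsupp.single_apply]
  have hginj : Function.Injective g := by
    intro x y hxy
    have h0 : (x.1 : ℕ) = (y.1 : ℕ) := by rw [← hg0 x, ← hg0 y, hxy]
    have h1 : (x.2 : ℕ) = (y.2 : ℕ) := by rw [← hg1 x, ← hg1 y, hxy]
    obtain ⟨x1, x2⟩ := x; obtain ⟨y1, y2⟩ := y
    simp only at h0 h1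
    have : x1 = y1 := Fin.ext h0
    subst this
    simp [Fin.ext_iff, h1]
  have hgsum : ∀ ab, (g ab).sum (fun _ e => e) = (ab.1 : ℕ) + (ab.2 : ℕ) := by
    intro ab
    rw [Finsupp.sum_add_index' (fun _ => rfl) (fun _ _ _ => rfl),
      Finsupp.sum_single_index rfl, Finsupp.sum_single_index rfl]
  have hmem : ∀ ab, monomial (g ab) (1 : ℝ) ∈ V := by
    intro ab
    rw [hV, mem_restrictTotalDegree, totalDegree_monomial _ (one_ne_zero), hgsum]
    have := ab.1.2
    have := ab.2.2
    omega
  let F : (Σ a : Fin n, Fin (n - (a : ℕ))) → V := fun ab => ⟨monomial (g ab) 1, hmem ab⟩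
  have hFli : LinearIndependent ℝ F := by
    have hli : LinearIndependent ℝ (fun ab => monomial (g ab) (1 : ℝ)) := by
      have := (basisMonomials (Fin 2) ℝ).linearIndependent.comp g hginj
      rw [coe_basisMonomials] at this; exact this
    apply LinearIndependent.of_comp V.subtype
    exact hli
  have hge : N ≤ Module.finrank ℝ V := hcard ▸ hFli.fintype_card_le_finrank
  have hle : Module.finrank ℝ V ≤ N := by
    have := LinearMap.finrank_le_finrank_of_injective hTinj
    rwa [Module.finrank_pi, Fintype.card_fin] at this
  have heq : Module.finrank ℝ V = Module.finrank ℝ (Fin N → ℝ) := by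
    rw [Module.finrank_pi, Fintype.card_fin]; omega
  have hTsurj := (LinearMap.injective_iff_surjective_of_finrank_eq_finrank heq).mp hTinj
  intro k
  obtain ⟨L, hL⟩ := hTsurj (Pi.single k 1)
  have hLdeg : (L : MvPolynomial (Fin 2) ℝ).totalDegree < n :=
    lt_of_le_of_lt ((mem_restrictTotalDegree _ _ _).mp L.2) (by omega)
  have horth := hPorth L hLdeg
  rw [hexact (P * L) (le_trans (totalDegree_mul _ _) (by rw [hPdeg]; omega))] at horth
  have hterm : ∀ j : Fin N, lam j * evalAt (node j) (P * (L : MvPolynomial (Fin 2) ℝ)) =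
      (if j = k then lam k * evalAt (node k) P else 0) := by
    intro j
    have hj := congrFun hL j
    rw [hTapp] at hj
    rw [Pi.single_apply] at hj
    simp only [evalAt, map_mul] at hj ⊢
    rw [hj]
    by_cases h : j = k
    · subst h; simp
    · simp [h]
  rw [Finset.sum_congr rfl (fun j _ => hterm j), Finset.sum_ite_eq' Finset.univ k] at horth
  simp only [Finset.mem_univ, if_true] at horth
  have := (hlam k).ne'
  rcases mul_eq_zero.mp horth with h | h
  · exact absurd h this
  · exact h
end
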